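/- Let G be a connected graph of treedepth at most d and let T be an arbitrary elimination tree of G (possibly of depth larger than d). Then there exists an elimination tree R of G of depth at most d such that for every vertex u of G and every pair of distinct children v₁, v₂ of u in T, it holds that cl_R(comp_T[v₁]) ∩ cl_R(comp_T[v₂]) = cl_R(tail_T[u]). -/

import Mathlib

structure RootedForest (V : Type) where
  parent : V → Option V
  vdepth : V → ℕ
  vdepth_root : ∀ v, parent v = none → vdepth v = 1
  vdepth_parent : ∀ v p, parent v = some p → vdepth v = vdepth p + 1

namespace RootedForest

variable {V : Type}

/-- `F.Anc u v` means `u` is an ancestor of `v` (reflexively). -/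
def Anc (F : RootedForest V) (u v : V) : Prop :=
  Relation.ReflTransGen (fun a b => F.parent a = some b) v u

/-- ancestors of `u`, including `u` itself. -/
def tail (F : RootedForest V) (u : V) : Set V := {w | F.Anc w u}

/-- descendants of `u`, including `u` itself. -/
def desc (F : RootedForest V) (u : V) : Set V := {w | F.Anc u w}

def comp (F : RootedForest V) (u : V) : Set V := F.tail u ∪ F.desc u

/-- ancestor closure of a set of vertices. -/
def cl (F : RootedForest V) (A : Set V) : Set V := ⋃ u ∈ A, F.tail u

/-- children of `u`. -/
def chld (F : RootedForest V) (u : V) : Set V := {v | F.parent v = some u}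

/-- the forest has depth at most `d`. -/
def DepthLE (F : RootedForest V) (d : ℕ) : Prop := ∀ v, F.vdepth v ≤ d

/-- the forest consists of a single tree. -/
def IsTree (F : RootedForest V) : Prop := ∃ r, ∀ v, F.Anc r v

end RootedForest

/-- `F` is an elimination forest of `G`: every edge joins an ancestor/descendant pair. -/
def SimpleGraph.IsElimForest {V : Type} (G : SimpleGraph V) (F : RootedForest V) : Prop :=
  ∀ u v, G.Adj u v → F.Anc u v ∨ F.Anc v u

/-- the treedepth of a graph. -/
noncomputable def SimpleGraph.treedepth {V : Type} (G : SimpleGraph V) : ℕ :=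
  sInf {d | ∃ F : RootedForest V, G.IsElimForest F ∧ F.DepthLE d}

namespace RootedForest
variable {V : Type} (F : RootedForest V)

theorem anc_refl (v : V) : F.Anc v v := Relation.ReflTransGen.refl

theorem anc_trans {a b c : V} (h1 : F.Anc a b) (h2 : F.Anc b c) : F.Anc a c :=
  Relation.ReflTransGen.trans h2 h1

theorem anc_vdepth_le {a b : V} (h : F.Anc a b) : F.vdepth a ≤ F.vdepth b := by
  induction h with
  | refl => exact le_refl _
  | tail hbc hstep ih =>
    rename_i c u
    have := F.vdepth_parent c u hstep
    omega

theorem anc_antisymm {a b : V} (h1 : F.Anc a b) (h2 : F.Anc b a) : a = b := by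
  have hd : F.vdepth a = F.vdepth b := le_antisymm (F.anc_vdepth_le h1) (F.anc_vdepth_le h2)
  cases (Relation.ReflTransGen.cases_head h1) with
  | inl h => exact h.symm
  | inr h =>
    obtain ⟨c, hstep, hrest⟩ := h
    have h3 := F.vdepth_parent b c hstep
    have h4 := F.anc_vdepth_le hrest
    omega

theorem anc_comparable {a b c : V} (h1 : F.Anc a c) (h2 : F.Anc b c) :
    F.Anc a b ∨ F.Anc b a := by
  induction h2 with
  | refl => exact Or.inl h1
  | tail hcx hstep ih =>
    rename_i x y
    cases ih with
    | inr h => exact Or.inr (Relation.ReflTransGen.tail h hstep)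
    | inl h =>
      cases (Relation.ReflTransGen.cases_head h) with
      | inl he => subst he; exact Or.inr (Relation.ReflTransGen.single hstep)
      | inr hh =>
        obtain ⟨z, hz, hrest⟩ := hh
        rw [hstep] at hz
        cases hz
        exact Or.inl hrest

theorem anc_child {u v w : V} (h : F.parent v = some u) :
    F.Anc w v ↔ w = v ∨ F.Anc w u := by
  constructor
  · intro hw
    cases (Relation.ReflTransGen.cases_head hw) with
    | inl he => exact Or.inl he.symm
    | inr hh =>
      obtain ⟨z, hz, hrest⟩ := hh
      rw [h] at hz; cases hz
      exact Or.inr hrest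
  · rintro (rfl | hw)
    · exact F.anc_refl w
    · exact Relation.ReflTransGen.head h hw

theorem desc_disjoint_children {u v₁ v₂ : V} (h1 : F.parent v₁ = some u)
    (h2 : F.parent v₂ = some u) (hne : v₁ ≠ v₂) : F.desc v₁ ∩ F.desc v₂ = ∅ := by
  ext w
  simp only [Set.mem_inter_iff, Set.mem_empty_iff_false, iff_false]
  rintro ⟨hw1, hw2⟩
  have hcomp := F.anc_comparable hw1 hw2
  have key : ∀ x y : V, F.parent x = some u → F.parent y = some u → F.Anc x y → x = y := by
    intro x y hx hy hxy
    rcases (F.anc_child hy).mp hxy with rfl | hxu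
    · rfl
    · have := F.anc_vdepth_le hxu
      have := F.vdepth_parent x u hx
      omega
  cases hcomp with
  | inl h => exact hne (key _ _ h1 h2 h)
  | inr h => exact hne (key _ _ h2 h1 h).symm

end RootedForest


def ReachIn {V : Type} (G : SimpleGraph V) (S : Set V) : V → V → Prop :=
  Relation.ReflTransGen (fun a b => G.Adj a b ∧ a ∈ S ∧ b ∈ S)

namespace ReachIn
variable {V : Type} {G : SimpleGraph V} {S S' : Set V} {a b c : V}

theorem refl : ReachIn G S a a := Relation.ReflTransGen.refl

theorem symm (h : ReachIn G S a b) : ReachIn G S b a := by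
  induction h with
  | refl => exact Relation.ReflTransGen.refl
  | tail h1 h2 ih => exact Relation.ReflTransGen.head ⟨h2.1.symm, h2.2.2, h2.2.1⟩ ih

theorem trans (h1 : ReachIn G S a b) (h2 : ReachIn G S b c) : ReachIn G S a c :=
  Relation.ReflTransGen.trans h1 h2

theorem mono (hS : S ⊆ S') (h : ReachIn G S a b) : ReachIn G S' a b :=
  Relation.ReflTransGen.mono (r := fun a b => G.Adj a b ∧ a ∈ S ∧ b ∈ S)
    (p := fun a b => G.Adj a b ∧ a ∈ S' ∧ b ∈ S') (fun x y hxy => ⟨hxy.1, hS hxy.2.1, hS hxy.2.2⟩) _ _ h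

end ReachIn

structure TDStruc {V : Type} (G : SimpleGraph V) (A : Finset V) (k : ℕ)
    (tl : V → Finset V) : Prop where
  mem_self : ∀ v ∈ A, v ∈ tl v
  subset_A : ∀ v ∈ A, tl v ⊆ A
  tls_trans : ∀ v ∈ A, ∀ u ∈ tl v, tl u ⊆ tl v
  chain : ∀ v ∈ A, ∀ u ∈ tl v, ∀ w ∈ tl v, tl u ⊆ tl w ∨ tl w ⊆ tl u
  antisymm : ∀ u ∈ A, ∀ v ∈ A, u ∈ tl v → v ∈ tl u → u = v
  card_le : ∀ v ∈ A, (tl v).card ≤ k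
  adj : ∀ u ∈ A, ∀ v ∈ A, G.Adj u v → u ∈ tl v ∨ v ∈ tl u

structure TDOut {V : Type} (G : SimpleGraph V) (A : Finset V) (k : ℕ)
    (tl' : V → Finset V) : Prop where
  struc : TDStruc G A k tl'
  root : ∃ r ∈ A, ∀ v ∈ A, r ∈ tl' v
  conn : ∀ v a b, a ∈ A → b ∈ A → v ∈ tl' a → v ∈ tl' b →
    ReachIn G {w : V | w ∈ A ∧ v ∈ tl' w} a b

variable {V : Type} {G : SimpleGraph V}

theorem exists_td_root {A : Finset V} {k : ℕ} {tl : V → Finset V}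
    (hs : TDStruc G A k tl) {v : V} (hv : v ∈ A) : ∃ m ∈ tl v, tl m = {m} := by
  obtain ⟨m, hm, hmin⟩ := Finset.exists_min_image (tl v) (fun u => (tl u).card)
    ⟨v, hs.mem_self v hv⟩
  have hmA : m ∈ A := hs.subset_A v hv hm
  refine ⟨m, hm, ?_⟩
  apply Finset.Subset.antisymm
  · intro u hu
    have huv : u ∈ tl v := hs.tls_trans v hv m hm hu
    have huA : u ∈ A := hs.subset_A v hv huv
    have hmu : tl m ⊆ tl u := by
      rcases hs.chain v hv u huv m hm with h | h
      · exact Finset.subset_of_eq (Finset.eq_of_subset_of_card_le h (hmin u huv)).symm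
      · exact h
    have hum : tl u ⊆ tl m := hs.tls_trans m hmA u hu
    have : u = m := hs.antisymm u huA m hmA hu (hmu (hs.mem_self m hmA))
    simp [this]
  · simp [hm, hs.mem_self m hmA]

theorem td_root_unique {A : Finset V} {k : ℕ} {tl : V → Finset V}
    (hs : TDStruc G A k tl) {v m m' : V} (hv : v ∈ A) (hm : m ∈ tl v) (hm1 : tl m = {m})
    (hm' : m' ∈ tl v) (hm1' : tl m' = {m'}) : m = m' := by
  rcases hs.chain v hv m hm m' hm' with h | h
  · rw [hm1, hm1'] at h; simpa using h
  · rw [hm1, hm1'] at h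
    have : m' = m := by simpa using h
    exact this.symm

theorem td_core (G : SimpleGraph V) : ∀ A : Finset V, ∀ (k : ℕ) (tl : V → Finset V),
    A.Nonempty → (∀ a ∈ A, ∀ b ∈ A, ReachIn G ↑A a b) → TDStruc G A k tl →
    ∃ tl', TDOut G A k tl' := by
  intro A
  induction A using Finset.strongInduction with
  | _ A ih =>
  intro k tl hne hconn hs
  classical
  obtain ⟨a₀, ha₀⟩ := hne
  obtain ⟨r, hra₀, hrsing⟩ := exists_td_root hs ha₀
  have hrA : r ∈ A := hs.subset_A a₀ ha₀ hra₀
  have hrall : ∀ v ∈ A, r ∈ tl v := by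
    intro v hv
    have key : ∀ b, ReachIn G ↑A a₀ b → b ∈ A ∧ r ∈ tl b := by
      intro b h
      induction h with
      | refl => exact ⟨ha₀, hra₀⟩
      | tail h1 h2 ih2 =>
        rename_i c b'
        obtain ⟨hcA, hrc⟩ := ih2
        have hbA : b' ∈ A := by simpa using h2.2.2
        refine ⟨hbA, ?_⟩
        rcases hs.adj c hcA b' hbA h2.1 with hcb | hbc
        · exact hs.tls_trans b' hbA c hcb hrc
        · obtain ⟨m, hmb, hmsing⟩ := exists_td_root hs hbA
          have hmc : m ∈ tl c := hs.tls_trans c hcA b' hbc hmb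
          have hmr : m = r := td_root_unique hs hcA hmc hmsing hrc hrsing
          rwa [hmr] at hmb
    exact (key v (hconn a₀ ha₀ v hv)).2
  have hk1 : 1 ≤ k := by
    have := hs.card_le r hrA; rw [hrsing] at this; simpa using this
  set A' := A.erase r with hA'
  have hA'A : A' ⊆ A := Finset.erase_subset r A
  have hmemA' : ∀ v, v ∈ A' ↔ v ≠ r ∧ v ∈ A := fun v => Finset.mem_erase
  set Cv : V → Finset V := fun v => A'.filter (fun w => ReachIn G ↑A' v w) with hCvdef
  have hCiff : ∀ v w, w ∈ Cv v ↔ w ∈ A' ∧ ReachIn G ↑A' v w := by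
    intro v w; simp [hCvdef]
  have hCvmem : ∀ v ∈ A', v ∈ Cv v := fun v hv => (hCiff v v).mpr ⟨hv, ReachIn.refl⟩
  have hCsub : ∀ v, Cv v ⊆ A' := fun v => Finset.filter_subset _ _
  have hCeq : ∀ v ∈ A', ∀ u, u ∈ Cv v → Cv u = Cv v := by
    intro v hv u hu
    obtain ⟨huA, hr2⟩ := (hCiff v u).mp hu
    ext w
    rw [hCiff, hCiff]
    exact ⟨fun ⟨hw, h⟩ => ⟨hw, hr2.trans h⟩, fun ⟨hw, h⟩ => ⟨hw, hr2.symm.trans h⟩⟩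
  have hstay : ∀ v ∈ A', ∀ b, ReachIn G ↑A' v b → ReachIn G ↑(Cv v) v b := by
    intro v hv b h
    have hmemC : ∀ c, ReachIn G ↑A' v c → c ∈ Cv v := by
      intro c hc
      exact (hCiff v c).mpr ⟨by
        induction hc with
        | refl => exact hv
        | tail h1 h2 _ => simpa using h2.2.2, hc⟩
    induction h with
    | refl => exact ReachIn.refl
    | tail h1 h2 ih2 =>
      rename_i c b'
      exact Relation.ReflTransGen.tail ih2
        ⟨h2.1, by simpa using hmemC c h1, by simpa using hmemC b' (Relation.ReflTransGen.tail h1 h2)⟩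
  -- recursive outputs for components
  have main : ∀ C : Finset V, ∃ out : V → Finset V,
      ((C ⊂ A ∧ C.Nonempty ∧ (∀ a ∈ C, ∀ b ∈ C, ReachIn G ↑C a b) ∧
        TDStruc G C (k-1) (fun w => tl w ∩ C)) → TDOut G C (k-1) out) := by
    intro C
    by_cases h : C ⊂ A ∧ C.Nonempty ∧ (∀ a ∈ C, ∀ b ∈ C, ReachIn G ↑C a b) ∧
        TDStruc G C (k-1) (fun w => tl w ∩ C)
    · obtain ⟨hss, hn, hc, hstruc⟩ := h
      obtain ⟨out, hout⟩ := ih C hss (k-1) _ hn hc hstruc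
      exact ⟨out, fun _ => hout⟩
    · exact ⟨fun _ => ∅, fun hq => absurd hq h⟩
  choose P hP using main
  have hQ : ∀ v ∈ A', TDOut G (Cv v) (k-1) (P (Cv v)) := by
    intro v hv
    apply hP
    refine ⟨?_, ⟨v, hCvmem v hv⟩, ?_, ?_⟩
    · rw [Finset.ssubset_iff_of_subset ((hCsub v).trans hA'A)]
      exact ⟨r, hrA, fun hr' => ((hmemA' r).mp (hCsub v hr')).1 rfl⟩
    · intro a ha b hb
      obtain ⟨haA, hva⟩ := (hCiff v a).mp ha
      obtain ⟨hbA, hvb⟩ := (hCiff v b).mp hb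
      have hab : ReachIn G ↑A' a b := hva.symm.trans hvb
      have h2 := hstay a haA b hab
      rwa [hCeq v hv a ha] at h2
    · constructor
      · intro w hw
        exact Finset.mem_inter.mpr ⟨hs.mem_self w (hA'A (hCsub v hw)), hw⟩
      · intro w _; exact Finset.inter_subset_right
      · intro w hw u hu
        have hwA : w ∈ A := hA'A (hCsub v hw)
        exact Finset.inter_subset_inter
          (hs.tls_trans w hwA u (Finset.mem_inter.mp hu).1) (le_refl _)
      · intro w hw u hu u' hu'
        have hwA : w ∈ A := hA'A (hCsub v hw)
        rcases hs.chain w hwA u (Finset.mem_inter.mp hu).1 u' (Finset.mem_inter.mp hu').1 with h | h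
        · exact Or.inl (Finset.inter_subset_inter h (le_refl _))
        · exact Or.inr (Finset.inter_subset_inter h (le_refl _))
      · intro u hu w hw h1 h2
        exact hs.antisymm u (hA'A (hCsub v hu)) w (hA'A (hCsub v hw))
          (Finset.mem_inter.mp h1).1 (Finset.mem_inter.mp h2).1
      · intro w hw
        have hwA : w ∈ A := hA'A (hCsub v hw)
        have hsub : tl w ∩ Cv v ⊆ (tl w).erase r := by
          intro x hx
          obtain ⟨hx1, hx2⟩ := Finset.mem_inter.mp hx
          exact Finset.mem_erase.mpr ⟨((hmemA' x).mp (hCsub v hx2)).1, hx1⟩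
        have h1 := Finset.card_le_card hsub
        have h2 := Finset.card_erase_of_mem (hrall w hwA)
        have h3 := hs.card_le w hwA
        omega
      · intro u hu w hw hadj
        rcases hs.adj u (hA'A (hCsub v hu)) w (hA'A (hCsub v hw)) hadj with h | h
        · exact Or.inl (Finset.mem_inter.mpr ⟨h, hu⟩)
        · exact Or.inr (Finset.mem_inter.mpr ⟨h, hw⟩)
  -- glue
  set tl' : V → Finset V := fun v =>
    if v = r then {r} else if v ∈ A' then insert r (P (Cv v) v) else ∅ with htl'
  have f2 : tl' r = {r} := by simp [htl']
  have f1 : ∀ v ∈ A', tl' v = insert r (P (Cv v) v) := by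
    intro v hv
    simp [htl', ((hmemA' v).mp hv).1, hv]
  have hcases : ∀ v ∈ A, v = r ∨ v ∈ A' := by
    intro v hv
    by_cases h : v = r
    · exact Or.inl h
    · exact Or.inr ((hmemA' v).mpr ⟨h, hv⟩)
  have hrin : ∀ v ∈ A, r ∈ tl' v := by
    intro v hv
    rcases hcases v hv with rfl | h
    · simp [f2]
    · rw [f1 v h]; exact Finset.mem_insert_self r _
  have hsubC : ∀ v ∈ A', P (Cv v) v ⊆ Cv v :=
    fun v hv => (hQ v hv).struc.subset_A v (hCvmem v hv)
  have hmemP : ∀ v ∈ A', v ∈ P (Cv v) v :=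
    fun v hv => (hQ v hv).struc.mem_self v (hCvmem v hv)
  have hmemtl' : ∀ v ∈ A', ∀ u, u ∈ tl' v → u ≠ r → (u ∈ P (Cv v) v ∧ u ∈ A' ∧ Cv u = Cv v) := by
    intro v hv u hu hur
    rw [f1 v hv] at hu
    have huP : u ∈ P (Cv v) v := by
      rcases Finset.mem_insert.mp hu with h | h
      · exact absurd h hur
      · exact h
    have huC : u ∈ Cv v := hsubC v hv huP
    exact ⟨huP, hCsub v huC, hCeq v hv u huC⟩
  refine ⟨tl', ?_, ⟨r, hrA, hrin⟩, ?_⟩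
  · constructor
    · intro v hv
      rcases hcases v hv with h0 | h
      · rw [h0, f2]; simp
      · rw [f1 v h]; exact Finset.mem_insert_of_mem (hmemP v h)
    · intro v hv
      rcases hcases v hv with h0 | h
      · rw [h0, f2]; simpa using hrA
      · rw [f1 v h]
        exact Finset.insert_subset hrA (((hsubC v h).trans (hCsub v)).trans hA'A)
    · intro v hv u hu
      rcases hcases v hv with h0 | h
      · rw [h0, f2] at hu
        have h3 : u = r := by simpa using hu
        rw [h0, h3, f2]
      · by_cases hur : u = r
        · subst hur
          rw [f2, f1 v h]
          simp
        · obtain ⟨huP, huA, huCeq⟩ := hmemtl' v h u hu hur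
          rw [f1 v h, f1 u huA, huCeq]
          exact Finset.insert_subset_insert _
            ((hQ v h).struc.tls_trans v (hCvmem v h) u huP)
    · intro v hv u hu w hw
      have hsubA : ∀ x ∈ A, tl' x ⊆ A := by
        intro x hx
        rcases hcases x hx with rfl | h
        · rw [f2]; simpa using hrA
        · rw [f1 x h]
          exact Finset.insert_subset hrA (((hsubC x h).trans (hCsub x)).trans hA'A)
      by_cases hur : u = r
      · subst hur
        left; rw [f2]
        simpa using hrin w (hsubA v hv hw)
      · by_cases hwr : w = r
        · subst hwr
          right; rw [f2]
          simpa using hrin u (hsubA v hv hu)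
        · have hvr : v ≠ r := by
            rintro rfl
            rw [f2] at hu
            exact hur (by simpa using hu)
          have hvA' : v ∈ A' := (hmemA' v).mpr ⟨hvr, hv⟩
          obtain ⟨huP, huA, huCeq⟩ := hmemtl' v hvA' u hu hur
          obtain ⟨hwP, hwA, hwCeq⟩ := hmemtl' v hvA' w hw hwr
          rcases (hQ v hvA').struc.chain v (hCvmem v hvA') u huP w hwP with h | h
          · left; rw [f1 u huA, f1 w hwA, huCeq, hwCeq]
            exact Finset.insert_subset_insert _ h
          · right; rw [f1 u huA, f1 w hwA, huCeq, hwCeq]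
            exact Finset.insert_subset_insert _ h
    · intro u hu v hv h1 h2
      by_cases hur : u = r
      · by_cases hvr : v = r
        · rw [hur, hvr]
        · rw [hur, f2] at h2
          exact absurd (by simpa using h2 : v = r) hvr
      · by_cases hvr : v = r
        · rw [hvr, f2] at h1
          exact absurd (by simpa using h1 : u = r) hur
        · have huA' : u ∈ A' := (hmemA' u).mpr ⟨hur, hu⟩
          have hvA' : v ∈ A' := (hmemA' v).mpr ⟨hvr, hv⟩
          obtain ⟨huP, _, huCeq⟩ := hmemtl' v hvA' u h1 hur
          obtain ⟨hvP, _, hvCeq⟩ := hmemtl' u huA' v h2 hvr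
          rw [huCeq] at hvP
          exact (hQ v hvA').struc.antisymm u (hsubC v hvA' huP) v (hCvmem v hvA') huP hvP
    · intro v hv
      rcases hcases v hv with h0 | h
      · rw [h0, f2]; simpa using hk1
      · rw [f1 v h]
        have h1 := Finset.card_insert_le r (P (Cv v) v)
        have h2 := (hQ v h).struc.card_le v (hCvmem v h)
        omega
    · intro u hu v hv hadj
      rcases hcases u hu with rfl | hu'
      · exact Or.inl (hrin v hv)
      · rcases hcases v hv with rfl | hv'
        · exact Or.inr (hrin u hu)
        · have hvC : v ∈ Cv u := (hCiff u v).mpr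
            ⟨hv', Relation.ReflTransGen.single ⟨hadj, by simpa using hu', by simpa using hv'⟩⟩
          have hCuv : Cv v = Cv u := hCeq u hu' v hvC
          rcases (hQ u hu').struc.adj u (hCvmem u hu') v hvC hadj with h | h
          · left; rw [f1 v hv', hCuv]
            exact Finset.mem_insert_of_mem h
          · right; rw [f1 u hu']
            exact Finset.mem_insert_of_mem h
  · -- connectivity of subtrees
    intro v a b ha hb hva hvb
    by_cases hvr : v = r
    · have hsub : (↑A : Set V) ⊆ {w : V | w ∈ A ∧ v ∈ tl' w} := by
        intro w hw
        refine ⟨by simpa using hw, ?_⟩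
        rw [hvr]
        exact hrin w (by simpa using hw)
      exact ReachIn.mono hsub (hconn a ha b hb)
    · have har : a ≠ r := by
        rintro rfl
        rw [f2] at hva
        exact hvr (by simpa using hva)
      have hbr : b ≠ r := by
        rintro rfl
        rw [f2] at hvb
        exact hvr (by simpa using hvb)
      have haA' : a ∈ A' := (hmemA' a).mpr ⟨har, ha⟩
      have hbA' : b ∈ A' := (hmemA' b).mpr ⟨hbr, hb⟩
      obtain ⟨hvaP, _, _⟩ := hmemtl' a haA' v hva hvr
      obtain ⟨hvbP, _, _⟩ := hmemtl' b hbA' v hvb hvr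
      have hvCa : v ∈ Cv a := hsubC a haA' hvaP
      have hvCb : v ∈ Cv b := hsubC b hbA' hvbP
      have hCab : Cv b = Cv a := by
        rw [← hCeq a haA' v hvCa, ← hCeq b hbA' v hvCb]
      have hbCa : b ∈ Cv a := by
        rw [← hCab]; exact hCvmem b hbA'
      have hvbP2 : v ∈ P (Cv a) b := by rw [← hCab]; exact hvbP
      have hrec := (hQ a haA').conn v a b (hCvmem a haA') hbCa hvaP hvbP2
      refine ReachIn.mono ?_ hrec
      intro w hw
      obtain ⟨hwC, hwP⟩ := hw
      have hwA' : w ∈ A' := hCsub a hwC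
      have hCwa : Cv w = Cv a := hCeq a haA' w hwC
      refine ⟨hA'A hwA', ?_⟩
      rw [f1 w hwA', hCwa]
      exact Finset.mem_insert_of_mem hwP

section Build
variable {V : Type} [DecidableEq V] {G : SimpleGraph V}

theorem td_parent_exists {A : Finset V} {k : ℕ} {tl : V → Finset V}
    (hs : TDStruc G A k tl) {v : V} (hv : v ∈ A)
    (hne : ((tl v).erase v).Nonempty) : ∃ p, tl p = (tl v).erase v := by
  obtain ⟨p, hp, hmax⟩ := Finset.exists_max_image ((tl v).erase v) (fun u => (tl u).card) hne
  have hpv : p ∈ tl v := Finset.mem_of_mem_erase hp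
  have hpA : p ∈ A := hs.subset_A v hv hpv
  refine ⟨p, Finset.Subset.antisymm ?_ ?_⟩
  · intro u hu
    have huv : u ∈ tl v := hs.tls_trans v hv p hpv hu
    refine Finset.mem_erase.mpr ⟨?_, huv⟩
    intro hueq
    rw [hueq] at hu
    exact (Finset.mem_erase.mp hp).1 (hs.antisymm p hpA v hv hpv hu)
  · intro u hu
    have huv : u ∈ tl v := Finset.mem_of_mem_erase hu
    have huA : u ∈ A := hs.subset_A v hv huv
    rcases hs.chain v hv u huv p hpv with h | h
    · exact h (hs.mem_self u huA)
    · have heq : tl p = tl u := Finset.eq_of_subset_of_card_le h (hmax u hu)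
      rw [heq]
      exact hs.mem_self u huA

noncomputable def buildForest (tl : V → Finset V)
    (hpar : ∀ v, ((tl v).erase v).Nonempty → ∃ p, tl p = (tl v).erase v)
    (hmem : ∀ v, v ∈ tl v) : RootedForest V where
  parent v := if h : ((tl v).erase v).Nonempty then some (hpar v h).choose else none
  vdepth v := (tl v).card
  vdepth_root := by
    intro v h
    by_cases hne : ((tl v).erase v).Nonempty
    · simp [hne] at h
    · have h2 : tl v = {v} := by
        apply Finset.Subset.antisymm
        · intro u hu
          by_contra hu2
          exact hne ⟨u, Finset.mem_erase.mpr ⟨by simpa using hu2, hu⟩⟩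
        · simp [hmem v]
      simp [h2]
  vdepth_parent := by
    intro v p h
    by_cases hne : ((tl v).erase v).Nonempty
    · have h' : (if h : ((tl v).erase v).Nonempty then some (hpar v h).choose else none)
          = some p := h
      rw [dif_pos hne] at h'
      have hp := (hpar v hne).choose_spec
      have hpe : p = (hpar v hne).choose := by simpa using h'.symm
      show (tl v).card = (tl p).card + 1
      rw [hpe, hp, Finset.card_erase_of_mem (hmem v)]
      have : 1 ≤ (tl v).card := Finset.card_pos.mpr ⟨v, hmem v⟩
      omega
    · exact absurd h (by simp [hne])

theorem buildForest_parent_eq {tl : V → Finset V}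
    {hpar : ∀ v, ((tl v).erase v).Nonempty → ∃ p, tl p = (tl v).erase v}
    {hmem : ∀ v, v ∈ tl v} {v p : V}
    (h : (buildForest tl hpar hmem).parent v = some p) : tl p = (tl v).erase v := by
  by_cases hne : ((tl v).erase v).Nonempty
  · have hpe : p = (hpar v hne).choose := by
      simpa [buildForest, hne] using h.symm
    rw [hpe]
    exact (hpar v hne).choose_spec
  · simp [buildForest, hne] at h

theorem buildForest_parent_some {tl : V → Finset V}
    {hpar : ∀ v, ((tl v).erase v).Nonempty → ∃ p, tl p = (tl v).erase v}
    {hmem : ∀ v, v ∈ tl v} {v : V} (hne : ((tl v).erase v).Nonempty) :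
    ∃ p, (buildForest tl hpar hmem).parent v = some p :=
  ⟨(hpar v hne).choose, by simp [buildForest, hne]⟩

theorem buildForest_anc_iff {A : Finset V} {k : ℕ} {tl : V → Finset V}
    (hs : TDStruc G A k tl) (hA : ∀ v, v ∈ A)
    (hpar : ∀ v, ((tl v).erase v).Nonempty → ∃ p, tl p = (tl v).erase v)
    (hmem : ∀ v, v ∈ tl v)
    (u v : V) : (buildForest tl hpar hmem).Anc u v ↔ u ∈ tl v := by
  constructor
  · intro h
    induction h with
    | refl => exact hmem v
    | tail h1 h2 ih =>
      rename_i c u'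
      have htp := buildForest_parent_eq h2
      have : u' ∈ tl c := Finset.mem_of_mem_erase (htp ▸ hmem u')
      exact hs.tls_trans v (hA v) c ih this
  · intro h
    have key : ∀ n v u, (tl v).card ≤ n → u ∈ tl v → (buildForest tl hpar hmem).Anc u v := by
      intro n
      induction n with
      | zero =>
        intro v u hc hu
        have := Finset.card_pos.mpr ⟨u, hu⟩
        omega
      | succ n ihn =>
        intro v u hc hu
        by_cases huv : u = v
        · subst huv; exact Relation.ReflTransGen.refl
        · have hne : ((tl v).erase v).Nonempty := ⟨u, Finset.mem_erase.mpr ⟨huv, hu⟩⟩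
          obtain ⟨p, hp⟩ := buildForest_parent_some (hmem := hmem) hne
          have htp := buildForest_parent_eq hp
          have hup : u ∈ tl p := htp ▸ Finset.mem_erase.mpr ⟨huv, hu⟩
          have hcard : (tl p).card ≤ n := by
            rw [htp, Finset.card_erase_of_mem (hmem v)]
            omega
          exact Relation.ReflTransGen.head hp (ihn p u hcard hup)
    exact key (tl v).card v u (le_refl _) h

end Build

section TailFinset
variable {V : Type} [DecidableEq V] [Fintype V]

theorem tail_finset_card_le (F : RootedForest V) :
    ∀ n v, F.vdepth v ≤ n → ((Set.toFinite (F.tail v)).toFinset).card ≤ F.vdepth v := by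
  intro n
  induction n with
  | zero =>
    intro v h
    exfalso
    cases hp : F.parent v with
    | none => have := F.vdepth_root v hp; omega
    | some p => have := F.vdepth_parent v p hp; omega
  | succ n ihn =>
    intro v h
    cases hp : F.parent v with
    | none =>
      have htail : F.tail v = {v} := by
        ext w
        constructor
        · intro hw
          rcases Relation.ReflTransGen.cases_head hw with he | ⟨z, hz, _⟩
          · exact he.symm
          · rw [hp] at hz; cases hz
        · intro hw
          have hwv : w = v := hw
          rw [hwv]; exact F.anc_refl v
      have : (Set.toFinite (F.tail v)).toFinset = {v} := by
        ext w; simp [Set.Finite.mem_toFinset, htail]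
      rw [this, F.vdepth_root v hp]
      simp
    | some p =>
      have hd := F.vdepth_parent v p hp
      have htail : F.tail v = insert v (F.tail p) := by
        ext w
        constructor
        · intro hw
          rcases (F.anc_child hp).mp hw with rfl | hw'
          · exact Set.mem_insert _ _
          · exact Set.mem_insert_of_mem _ hw'
        · intro hw
          rcases hw with rfl | hw'
          · exact F.anc_refl w
          · exact (F.anc_child hp).mpr (Or.inr hw')
      have heq : (Set.toFinite (F.tail v)).toFinset
          = insert v ((Set.toFinite (F.tail p)).toFinset) := by
        ext w; simp [Set.Finite.mem_toFinset, htail]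
      rw [heq]
      have h1 := Finset.card_insert_le v ((Set.toFinite (F.tail p)).toFinset)
      have h2 := ihn p (by omega)
      omega

end TailFinset

theorem exists_sensible_elimTree {V : Type} [Fintype V] (G : SimpleGraph V)
    (hG : G.Connected) (d : ℕ) (hd : G.treedepth ≤ d)
    (T : RootedForest V) (hT : G.IsElimForest T) (hTtree : T.IsTree) :
    ∃ R : RootedForest V, G.IsElimForest R ∧ R.IsTree ∧ R.DepthLE d ∧
      ∀ u v₁ v₂ : V, v₁ ∈ T.chld u → v₂ ∈ T.chld u → v₁ ≠ v₂ →
        R.cl (T.comp v₁) ∩ R.cl (T.comp v₂) = R.cl (T.tail u) := by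
  classical
  -- a minimum-depth elimination forest, of depth ≤ d
  have hSnon : ({k | ∃ F : RootedForest V, G.IsElimForest F ∧ F.DepthLE k}).Nonempty :=
    ⟨Finset.univ.sup T.vdepth, T, hT, fun v => Finset.le_sup (Finset.mem_univ v)⟩
  obtain ⟨F0, hF0elim, hF0d⟩ := Nat.sInf_mem hSnon
  have hd' : sInf {k | ∃ F : RootedForest V, G.IsElimForest F ∧ F.DepthLE k} ≤ d := hd
  have hF0d' : F0.DepthLE d := fun v => le_trans (hF0d v) hd'
  -- tail finsets of F0
  set tl0 : V → Finset V := fun v => (Set.toFinite (F0.tail v)).toFinset with htl0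
  have htl0mem : ∀ u v, u ∈ tl0 v ↔ F0.Anc u v := by
    intro u v
    simp only [htl0, Set.Finite.mem_toFinset]
    exact Iff.rfl
  have hs0 : TDStruc G Finset.univ d tl0 := by
    constructor
    · intro v _; exact (htl0mem v v).mpr (F0.anc_refl v)
    · intro v _; exact fun u _ => Finset.mem_univ u
    · intro v _ u hu w hw
      exact (htl0mem w v).mpr (F0.anc_trans ((htl0mem w u).mp hw) ((htl0mem u v).mp hu))
    · intro v _ u hu w hw
      rcases F0.anc_comparable ((htl0mem u v).mp hu) ((htl0mem w v).mp hw) with h | h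
      · exact Or.inl (fun z hz => (htl0mem z w).mpr (F0.anc_trans ((htl0mem z u).mp hz) h))
      · exact Or.inr (fun z hz => (htl0mem z u).mpr (F0.anc_trans ((htl0mem z w).mp hz) h))
    · intro u _ v _ h1 h2
      exact F0.anc_antisymm ((htl0mem u v).mp h1) ((htl0mem v u).mp h2)
    · intro v _
      exact le_trans (tail_finset_card_le F0 (F0.vdepth v) v (le_refl _)) (hF0d' v)
    · intro u _ v _ hadj
      rcases hF0elim u v hadj with h | h
      · exact Or.inl ((htl0mem u v).mpr h)
      · exact Or.inr ((htl0mem v u).mpr h)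
  have : Nonempty V := hG.nonempty
  have huniv : (Finset.univ : Finset V).Nonempty := Finset.univ_nonempty
  have hconn0 : ∀ a ∈ (Finset.univ : Finset V), ∀ b ∈ (Finset.univ : Finset V),
      ReachIn G ↑(Finset.univ : Finset V) a b := by
    intro a _ b _
    have hr := hG.preconnected a b
    rw [SimpleGraph.reachable_iff_reflTransGen] at hr
    exact Relation.ReflTransGen.mono (r := G.Adj)
      (p := fun a b => G.Adj a b ∧ a ∈ (↑(Finset.univ : Finset V) : Set V) ∧ b ∈ (↑(Finset.univ : Finset V) : Set V))
      (fun x y h => ⟨h, by simp, by simp⟩) _ _ hr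
  obtain ⟨tl', hout⟩ := td_core G Finset.univ d tl0 huniv hconn0 hs0
  have hmem' : ∀ v, v ∈ tl' v := fun v => hout.struc.mem_self v (Finset.mem_univ v)
  have hpar : ∀ v, ((tl' v).erase v).Nonempty → ∃ p, tl' p = (tl' v).erase v :=
    fun v h => td_parent_exists hout.struc (Finset.mem_univ v) h
  set R := buildForest tl' hpar hmem' with hR
  have hanc : ∀ u v, R.Anc u v ↔ u ∈ tl' v :=
    buildForest_anc_iff hout.struc (fun v => Finset.mem_univ v) hpar hmem'
  have hcl : ∀ (A : Set V) (x : V), x ∈ R.cl A ↔ ∃ a ∈ A, R.Anc x a := by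
    intro A x
    simp only [RootedForest.cl, Set.mem_iUnion, RootedForest.tail, Set.mem_setOf_eq]
    exact ⟨fun ⟨a, ha, h⟩ => ⟨a, ha, h⟩, fun ⟨a, ha, h⟩ => ⟨a, ha, h⟩⟩
  obtain ⟨r, -, hrall⟩ := hout.root
  refine ⟨R, ?_, ⟨r, fun v => (hanc r v).mpr (hrall v (Finset.mem_univ v))⟩, ?_, ?_⟩
  · intro u v hadj
    rcases hout.struc.adj u (Finset.mem_univ u) v (Finset.mem_univ v) hadj with h | h
    · exact Or.inl ((hanc u v).mpr h)
    · exact Or.inr ((hanc v u).mpr h)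
  · intro v
    exact hout.struc.card_le v (Finset.mem_univ v)
  · intro u v₁ v₂ hv₁ hv₂ hne
    have hpar1 : T.parent v₁ = some u := hv₁
    have hpar2 : T.parent v₂ = some u := hv₂
    have htailmem : ∀ w z : V, w ∈ T.tail z ↔ T.Anc w z := fun w z => Iff.rfl
    apply Set.Subset.antisymm
    · rintro x ⟨hx1, hx2⟩
      rw [hcl] at hx1 hx2
      obtain ⟨a₁, ha₁, hxa₁⟩ := hx1
      obtain ⟨a₂, ha₂, hxa₂⟩ := hx2
      by_cases h₁ : a₁ ∈ T.tail u
      · exact (hcl _ x).mpr ⟨a₁, h₁, hxa₁⟩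
      by_cases h₂ : a₂ ∈ T.tail u
      · exact (hcl _ x).mpr ⟨a₂, h₂, hxa₂⟩
      have hd₁ : T.Anc v₁ a₁ := by
        rcases ha₁ with h | h
        · rcases (T.anc_child hpar1).mp h with he | hh
          · rw [he]; exact T.anc_refl v₁
          · exact absurd hh h₁
        · exact h
      have hd₂ : T.Anc v₂ a₂ := by
        rcases ha₂ with h | h
        · rcases (T.anc_child hpar2).mp h with he | hh
          · rw [he]; exact T.anc_refl v₂
          · exact absurd hh h₂
        · exact h
      have hxa₁' : x ∈ tl' a₁ := (hanc x a₁).mp hxa₁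
      have hxa₂' : x ∈ tl' a₂ := (hanc x a₂).mp hxa₂
      have hreach := hout.conn x a₁ a₂ (Finset.mem_univ a₁) (Finset.mem_univ a₂) hxa₁' hxa₂'
      by_cases hmeet : ∃ w ∈ T.tail u, x ∈ tl' w
      · obtain ⟨w, hw, hxw⟩ := hmeet
        exact (hcl _ x).mpr ⟨w, hw, (hanc x w).mpr hxw⟩
      · exfalso
        push_neg at hmeet
        have hstep : ∀ b, ReachIn G {w : V | w ∈ (Finset.univ : Finset V) ∧ x ∈ tl' w} a₁ b →
            T.Anc v₁ b := by
          intro b h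
          induction h with
          | refl => exact hd₁
          | tail h1 h2 ih =>
            rename_i c b'
            have hb'nt : ¬ T.Anc b' u := fun hb => hmeet b' hb h2.2.2.2
            rcases hT c b' h2.1 with h | h
            · exact T.anc_trans ih h
            · rcases T.anc_comparable h ih with h3 | h3
              · rcases (T.anc_child hpar1).mp h3 with he | hh
                · rw [he]; exact T.anc_refl v₁
                · exact absurd hh hb'nt
              · exact h3
        have hfin : T.Anc v₁ a₂ := hstep a₂ hreach
        have hdisj := T.desc_disjoint_children hpar1 hpar2 hne
        have : a₂ ∈ T.desc v₁ ∩ T.desc v₂ := ⟨hfin, hd₂⟩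
        rw [hdisj] at this
        exact this
    · intro x hx
      rw [hcl] at hx
      obtain ⟨a, ha, hxa⟩ := hx
      constructor
      · exact (hcl _ x).mpr ⟨a, Or.inl (T.anc_trans ha (Relation.ReflTransGen.single hpar1)), hxa⟩
      · exact (hcl _ x).mpr ⟨a, Or.inl (T.anc_trans ha (Relation.ReflTransGen.single hpar2)), hxa⟩
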